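/- Let ψ: ℝ → ℝ be C¹, non-negative, with ψ(0)=1, ψ even, and suppose there exist C>0 and δ>1 such that |ψ(x)| + |x·ψ'(x)| ≤ C·(1+x²)^{-δ/2} for all x ∈ ℝ. Let μ be a probability measure on ℝ, 0 < α ≤ 1, and x ∈ ℝ. If D_μ^α(x) := limsup_{ε→0⁺} μ((x−ε, x+ε))/(2ε)^α = ∞, then C_{μ,ψ}^α(x) := limsup_{a→0⁺} a^{−α}·(ψ_a * μ)(x) = ∞, where ψ_a(x) = ψ(x/a). Consequently, for non-negative ψ, C_{μ,ψ}^α(x) and D_μ^α(x) are either both finite or both infinite. -/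

import Mathlib

open MeasureTheory Filter Real Set Topology

private lemma ereal_limsup_eq_top_of_freq {l : Filter ℝ} {u : ℝ → EReal}
    (h : ∀ M : ℝ, ∃ᶠ z in l, (M : EReal) ≤ u z) : Filter.limsup u l = ⊤ := by
  rw [EReal.eq_top_iff_forall_lt]
  intro y
  have h1 : ((y : ℝ) : EReal) < ((y + 1 : ℝ) : EReal) := by
    exact_mod_cast lt_add_one y
  exact h1.trans_le (le_limsup_of_frequently_le (h (y + 1)))

private lemma ereal_freq_of_limsup_top {l : Filter ℝ} {u : ℝ → EReal}
    (h : Filter.limsup u l = ⊤) (M : ℝ) : ∃ᶠ z in l, (M : EReal) < u z := by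
  by_contra hc
  rw [not_frequently] at hc
  have h2 : Filter.limsup u l ≤ (M : EReal) :=
    limsup_le_of_le (by isBoundedDefault) (hc.mono fun z hz => not_lt.mp hz)
  rw [h] at h2
  exact absurd (lt_of_le_of_lt h2 (EReal.coe_lt_top M)) (lt_irrefl _)

private lemma conv_integrable (ψ : ℝ → ℝ) (hcont : Continuous ψ) {C : ℝ}
    (hb : ∀ t, |ψ t| ≤ C) (μ : Measure ℝ) [IsFiniteMeasure μ] (x a : ℝ) :
    Integrable (fun y => ψ ((x - y) / a)) μ := by
  refine (integrable_const C).mono'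
    ((hcont.comp ((continuous_const.sub continuous_id).div_const a)).aestronglyMeasurable) ?_
  exact Eventually.of_forall fun y => by simpa [Real.norm_eq_abs] using hb ((x - y) / a)

private lemma psi_bounded (ψ : ℝ → ℝ) {C δ : ℝ} (hC : 0 ≤ C) (hδ : 0 < δ)
    (hdec : ∀ t : ℝ, |ψ t| + |t * deriv ψ t| ≤ C * (1 + t ^ 2) ^ (-δ / 2)) (t : ℝ) :
    |ψ t| ≤ C := by
  have h1 := hdec t
  have h2 : (1 + t ^ 2 : ℝ) ^ (-δ / 2) ≤ 1 :=
    Real.rpow_le_one_of_one_le_of_nonpos (by nlinarith [sq_nonneg t]) (by linarith)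
  have h3 : (0:ℝ) ≤ |t * deriv ψ t| := abs_nonneg _
  nlinarith [mul_le_mul_of_nonneg_left h2 hC]

private lemma psi_decay (ψ : ℝ → ℝ) {C δ : ℝ} (hC : 0 ≤ C) (hδ : 0 < δ)
    (hdec : ∀ t : ℝ, |ψ t| + |t * deriv ψ t| ≤ C * (1 + t ^ 2) ^ (-δ / 2))
    {t r : ℝ} (hr : 1 ≤ r) (hrt : r ≤ |t|) : ψ t ≤ C * r ^ (-δ) := by
  have h0 : (0:ℝ) < r := lt_of_lt_of_le one_pos hr
  have h1 : r ^ 2 ≤ 1 + t ^ 2 := by nlinarith [sq_abs t, abs_nonneg t]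
  have h2 : (1 + t ^ 2 : ℝ) ^ (-δ / 2) ≤ ((r : ℝ) ^ 2) ^ (-δ / 2) :=
    Real.rpow_le_rpow_of_nonpos (by positivity) h1 (by linarith)
  have h3 : ((r : ℝ) ^ 2) ^ (-δ / 2) = r ^ (-δ) := by
    rw [← Real.rpow_natCast r 2, ← Real.rpow_mul h0.le,
      show ((2:ℕ):ℝ) * (-δ / 2) = -δ by push_cast; ring]
  have h4 := hdec t
  have h5 : ψ t ≤ |ψ t| := le_abs_self _
  have h6 := mul_le_mul_of_nonneg_left h2 hC
  rw [h3] at h6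
  linarith [abs_nonneg (t * deriv ψ t)]

private lemma conv_upper (ψ : ℝ → ℝ) (hcont : Continuous ψ) {C δ : ℝ} (hC : 0 < C) (hδ : 1 < δ)
    (hbound : ∀ t, |ψ t| ≤ C) (hbig : ∀ {t r : ℝ}, 1 ≤ r → r ≤ |t| → ψ t ≤ C * r ^ (-δ))
    (μ : Measure ℝ) [IsProbabilityMeasure μ] {α : ℝ} (hα0 : 0 < α) (hα1 : α ≤ 1) (x : ℝ)
    {K : ℝ} (hK0 : 0 < K)
    (hK : ∀ ε : ℝ, 0 < ε → (μ (Ioo (x - ε) (x + ε))).toReal ≤ K * ε ^ α) :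
    ∃ K' : ℝ, 0 < K' ∧ ∀ a : ℝ, 0 < a → (∫ y, ψ ((x - y) / a) ∂μ) ≤ K' * a ^ α := by
  have h2 : (0:ℝ) < 2 := two_pos
  set σ : ℝ := (2:ℝ) ^ (1 - δ) with hσ
  have hσ0 : 0 < σ := Real.rpow_pos_of_pos h2 _
  have hσ1 : σ < 1 := Real.rpow_lt_one_of_one_lt_of_neg one_lt_two (by linarith)
  have h1σ : 0 < 1 - σ := by linarith
  refine ⟨C * K * (4 / σ + 2) * (1 - σ)⁻¹,
    mul_pos (mul_pos (mul_pos hC hK0) (by positivity)) (inv_pos.mpr h1σ), fun a ha => ?_⟩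
  have hint : Integrable (fun y => ψ ((x - y) / a)) μ := conv_integrable ψ hcont hbound μ x a
  set b : ℕ → ℝ := fun k => a * ((2:ℝ) ^ k - 1) with hb
  have hbmono : Monotone b := by
    intro m n hmn
    have h2n : (2:ℝ) ^ m ≤ 2 ^ n := pow_le_pow_right₀ one_le_two hmn
    simp only [hb]
    nlinarith
  set s : ℕ → Set ℝ := fun k => (fun y => |x - y|) ⁻¹' Ico (b k) (b (k + 1)) with hs
  have hmeas : ∀ k, MeasurableSet (s k) := fun k =>
    ((continuous_const.sub continuous_id).abs.measurable) measurableSet_Ico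
  have hdisj : Pairwise (Function.onFun Disjoint s) := by
    intro k l hkl
    refine Disjoint.preimage _ ?_
    rw [Set.Ico_disjoint_Ico]
    rcases hkl.lt_or_gt with h | h
    · exact le_trans (min_le_left _ _) (le_trans (hbmono h) (le_max_right _ _))
    · exact le_trans (min_le_right _ _) (le_trans (hbmono h) (le_max_left _ _))
  have hunion : (⋃ k, s k) = univ := by
    ext y
    simp only [mem_iUnion, mem_univ, iff_true, hs, mem_preimage, mem_Ico]
    have hr : 0 ≤ |x - y| := abs_nonneg _
    have hex : ∃ k : ℕ, |x - y| < b (k + 1) := by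
      obtain ⟨k, hk⟩ := pow_unbounded_of_one_lt (|x - y| / a + 1) (one_lt_two (α := ℝ))
      refine ⟨k, lt_of_lt_of_le ?_ (hbmono (Nat.le_succ k))⟩
      have h1 : |x - y| / a < 2 ^ k - 1 := by linarith
      have h1' := (div_lt_iff₀ ha).mp h1
      simp only [hb]
      nlinarith
    classical
    refine ⟨Nat.find hex, ?_, Nat.find_spec hex⟩
    rcases Nat.eq_zero_or_pos (Nat.find hex) with h0 | h0
    · rw [h0]; simpa [hb] using hr
    · obtain ⟨m, hm⟩ := Nat.exists_eq_succ_of_ne_zero h0.ne'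
      rw [hm]
      have hmin := Nat.find_min hex (show m < Nat.find hex by omega)
      exact not_lt.mp hmin
  have hsum : HasSum (fun k => ∫ y in s k, ψ ((x - y) / a) ∂μ) (∫ y, ψ ((x - y) / a) ∂μ) := by
    have h := hasSum_integral_iUnion hmeas hdisj hint.integrableOn
    rwa [hunion, setIntegral_univ] at h
  -- measure bound on each annulus
  have hμ : ∀ k, (μ (s k)).toReal ≤ K * (a * 2 ^ (k+1)) ^ α := by
    intro k
    have hsub : s k ⊆ Ioo (x - a * 2 ^ (k+1)) (x + a * 2 ^ (k+1)) := by
      intro y hy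
      simp only [hs, mem_preimage, mem_Ico, hb] at hy
      have hlt : |x - y| < a * 2 ^ (k+1) := by
        have := hy.2
        nlinarith [pow_pos h2 (k+1)]
      rw [abs_sub_lt_iff] at hlt
      exact ⟨by linarith [hlt.1], by linarith [hlt.2]⟩
    calc (μ (s k)).toReal ≤ (μ (Ioo (x - a * 2 ^ (k+1)) (x + a * 2 ^ (k+1)))).toReal :=
          ENNReal.toReal_mono (measure_ne_top μ _) (measure_mono hsub)
      _ ≤ K * (a * 2 ^ (k+1)) ^ α := hK _ (by positivity)
  -- the key exponent computation
  have key : ∀ j : ℕ, ((2:ℝ) ^ j) ^ (-δ) * (2:ℝ) ^ (j+2) = 4 * σ ^ j := by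
    intro j
    have e1 : ((2:ℝ) ^ j : ℝ) ^ (-δ) = (2:ℝ) ^ ((j:ℝ) * (-δ)) := by
      rw [← Real.rpow_natCast (2:ℝ) j, ← Real.rpow_mul h2.le]
    have e2 : ((2:ℝ)) ^ (j+2) = 4 * (2:ℝ) ^ ((j:ℝ)) := by
      rw [pow_add, Real.rpow_natCast (2:ℝ) j]; ring
    have e3 : σ ^ j = (2:ℝ) ^ ((1 - δ) * (j:ℝ)) := by
      rw [hσ, ← Real.rpow_natCast ((2:ℝ) ^ (1 - δ)) j, ← Real.rpow_mul h2.le]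
    calc ((2:ℝ) ^ j) ^ (-δ) * (2:ℝ) ^ (j+2)
        = 4 * ((2:ℝ) ^ ((j:ℝ) * (-δ)) * (2:ℝ) ^ ((j:ℝ))) := by rw [e1, e2]; ring
      _ = 4 * (2:ℝ) ^ ((j:ℝ) * (-δ) + (j:ℝ)) := by rw [← Real.rpow_add h2]
      _ = 4 * σ ^ j := by
          rw [e3, show (j:ℝ) * (-δ) + (j:ℝ) = (1 - δ) * (j:ℝ) by ring]
  -- per-annulus integral bound
  have hA : ∀ k, (∫ y in s k, ψ ((x - y) / a) ∂μ) ≤ C * K * a ^ α * ((4 / σ + 2) * σ ^ k) := by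
    intro k
    match k with
    | 0 =>
      have h1 : (∫ y in s 0, ψ ((x - y) / a) ∂μ) ≤ ∫ _ in s 0, C ∂μ :=
        setIntegral_mono_on hint.integrableOn
          (integrableOn_const (measure_ne_top _ _)) (hmeas 0)
          (fun y _ => le_trans (le_abs_self _) (hbound _))
      rw [setIntegral_const, smul_eq_mul] at h1
      have h2' : (μ (s 0)).toReal * C ≤ (K * (a * 2 ^ 1) ^ α) * C :=
        mul_le_mul_of_nonneg_right (hμ 0) hC.le
      have h3 : (a * 2 ^ 1 : ℝ) ^ α = a ^ α * 2 ^ α := by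
        rw [Real.mul_rpow ha.le (by norm_num), pow_one]
      have h4 : (2:ℝ) ^ α ≤ 2 := by
        calc (2:ℝ) ^ α ≤ (2:ℝ) ^ (1:ℝ) := Real.rpow_le_rpow_of_exponent_le one_le_two hα1
          _ = 2 := Real.rpow_one 2
      have h5 : K * (a ^ α * 2 ^ α) * C ≤ C * K * a ^ α * ((4 / σ + 2) * σ ^ 0) := by
        simp only [pow_zero, mul_one]
        have hge : (2:ℝ) ≤ 4 / σ + 2 := by
          have h40 : (0:ℝ) < 4 / σ := by positivity
          linarith
        nlinarith [Real.rpow_nonneg ha.le α, Real.rpow_nonneg (le_of_lt h2) α,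
          mul_le_mul_of_nonneg_left h4 (by positivity : (0:ℝ) ≤ K * a ^ α * C),
          mul_le_mul_of_nonneg_left hge (by positivity : (0:ℝ) ≤ C * K * a ^ α)]
      calc (∫ y in s 0, ψ ((x - y) / a) ∂μ) ≤ (μ (s 0)).toReal * C := h1
        _ ≤ (K * (a * 2 ^ 1) ^ α) * C := h2'
        _ = K * (a ^ α * 2 ^ α) * C := by rw [h3]
        _ ≤ C * K * a ^ α * ((4 / σ + 2) * σ ^ 0) := h5
    | (j+1) =>
      have h2j : (1:ℝ) ≤ 2 ^ j := one_le_pow₀ one_le_two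
      have hfb : ∀ y ∈ s (j+1), ψ ((x - y) / a) ≤ C * ((2:ℝ) ^ j) ^ (-δ) := by
        intro y hy
        simp only [hs, mem_preimage, mem_Ico, hb] at hy
        have hge : a * 2 ^ j ≤ |x - y| := by
          refine le_trans ?_ hy.1
          have hp : (2:ℝ) ^ (j+1) = 2 * 2 ^ j := by rw [pow_succ]; ring
          nlinarith [mul_nonneg ha.le (by linarith : (0:ℝ) ≤ 2 ^ j - 1)]
        have habs : (2:ℝ) ^ j ≤ |(x - y) / a| := by
          rw [abs_div, abs_of_pos ha, le_div_iff₀ ha]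
          linarith
        exact hbig h2j habs
      have h1 : (∫ y in s (j+1), ψ ((x - y) / a) ∂μ) ≤ ∫ _ in s (j+1), C * ((2:ℝ) ^ j) ^ (-δ) ∂μ :=
        setIntegral_mono_on hint.integrableOn
          (integrableOn_const (measure_ne_top _ _)) (hmeas _) hfb
      rw [setIntegral_const, smul_eq_mul] at h1
      have hconst0 : (0:ℝ) ≤ C * ((2:ℝ) ^ j) ^ (-δ) := by positivity
      have h3 : (∫ y in s (j+1), ψ ((x - y) / a) ∂μ)
          ≤ K * (a * 2 ^ (j+2)) ^ α * (C * ((2:ℝ) ^ j) ^ (-δ)) :=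
        le_trans h1 (mul_le_mul_of_nonneg_right (hμ (j+1)) hconst0)
      have e1 : (a * 2 ^ (j+2) : ℝ) ^ α = a ^ α * ((2:ℝ) ^ (j+2)) ^ α :=
        Real.mul_rpow ha.le (by positivity)
      have e2 : ((2:ℝ) ^ (j+2)) ^ α ≤ (2:ℝ) ^ (j+2) := by
        calc ((2:ℝ) ^ (j+2)) ^ α ≤ ((2:ℝ) ^ (j+2)) ^ (1:ℝ) :=
              Real.rpow_le_rpow_of_exponent_le (one_le_pow₀ one_le_two) hα1
          _ = (2:ℝ) ^ (j+2) := Real.rpow_one _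
      have h4 : K * (a * 2 ^ (j+2)) ^ α * (C * ((2:ℝ) ^ j) ^ (-δ))
          ≤ K * (a ^ α * (2:ℝ) ^ (j+2)) * (C * ((2:ℝ) ^ j) ^ (-δ)) := by
        rw [e1]
        exact mul_le_mul_of_nonneg_right
          (mul_le_mul_of_nonneg_left
            (mul_le_mul_of_nonneg_left e2 (Real.rpow_nonneg ha.le α)) hK0.le)
          hconst0
      have h5 : K * (a ^ α * (2:ℝ) ^ (j+2)) * (C * ((2:ℝ) ^ j) ^ (-δ))
          = C * K * a ^ α * (4 * σ ^ j) := by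
        rw [← key j]; ring
      have h6 : C * K * a ^ α * (4 * σ ^ j) ≤ C * K * a ^ α * ((4 / σ + 2) * σ ^ (j+1)) := by
        have e3 : (4 / σ) * σ ^ (j+1) = 4 * σ ^ j := by
          rw [pow_succ]; field_simp
        have : (4:ℝ) * σ ^ j ≤ (4 / σ + 2) * σ ^ (j+1) := by
          rw [add_mul, e3]
          nlinarith [pow_nonneg hσ0.le (j+1)]
        exact mul_le_mul_of_nonneg_left this (by positivity)
      linarith
  have hBsum : HasSum (fun k : ℕ => C * K * a ^ α * ((4 / σ + 2) * σ ^ k))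
      (C * K * a ^ α * ((4 / σ + 2) * (1 - σ)⁻¹)) := by
    have h := (hasSum_geometric_of_lt_one hσ0.le hσ1).mul_left (C * K * a ^ α * (4 / σ + 2))
    simpa [mul_assoc] using h
  have := hasSum_le hA hsum hBsum
  calc (∫ y, ψ ((x - y) / a) ∂μ) ≤ C * K * a ^ α * ((4 / σ + 2) * (1 - σ)⁻¹) := this
    _ = C * K * (4 / σ + 2) * (1 - σ)⁻¹ * a ^ α := by ring

theorem upper_alpha_density_infinite_iff_conv_infinite
    (ψ : ℝ → ℝ) (hC1 : ContDiff ℝ 1 ψ) (hpos : ∀ x : ℝ, 0 ≤ ψ x) (hψ0 : ψ 0 = 1)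
    (heven : ∀ x : ℝ, ψ (-x) = ψ x)
    (hdecay : ∃ C > (0:ℝ), ∃ δ > (1:ℝ), ∀ x : ℝ,
      |ψ x| + |x * deriv ψ x| ≤ C * (1 + x ^ 2) ^ (-δ / 2))
    (μ : Measure ℝ) [IsProbabilityMeasure μ]
    (α : ℝ) (hα0 : 0 < α) (hα1 : α ≤ 1) (x : ℝ) :
    (Filter.limsup
        (fun ε : ℝ => (((μ (Ioo (x - ε) (x + ε))).toReal / (2 * ε) ^ α : ℝ) : EReal))
        (𝓝[>] 0) = ⊤ →
      Filter.limsup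
        (fun a : ℝ => ((a ^ (-α) * ∫ y : ℝ, ψ ((x - y) / a) ∂μ : ℝ) : EReal))
        (𝓝[>] 0) = ⊤) ∧
    (Filter.limsup
        (fun a : ℝ => ((a ^ (-α) * ∫ y : ℝ, ψ ((x - y) / a) ∂μ : ℝ) : EReal))
        (𝓝[>] 0) < ⊤ ↔
      Filter.limsup
        (fun ε : ℝ => (((μ (Ioo (x - ε) (x + ε))).toReal / (2 * ε) ^ α : ℝ) : EReal))
        (𝓝[>] 0) < ⊤) := by
  obtain ⟨C, hC, δ, hδ, hdec⟩ := hdecay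
  have hcont : Continuous ψ := hC1.continuous
  have hbound : ∀ t, |ψ t| ≤ C := psi_bounded ψ hC.le (by linarith) hdec
  -- Part 1 : D = ⊤ → C = ⊤
  have part1 : Filter.limsup
        (fun ε : ℝ => (((μ (Ioo (x - ε) (x + ε))).toReal / (2 * ε) ^ α : ℝ) : EReal))
        (𝓝[>] 0) = ⊤ →
      Filter.limsup
        (fun a : ℝ => ((a ^ (-α) * ∫ y : ℝ, ψ ((x - y) / a) ∂μ : ℝ) : EReal))
        (𝓝[>] 0) = ⊤ := by
    intro hD
    -- ψ ≥ 1/2 near 0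
    obtain ⟨d, hd0, hd⟩ := Metric.continuousAt_iff.mp hcont.continuousAt (1/2) one_half_pos
    set c : ℝ := d / 2 with hcdef
    have hc : 0 < c := by positivity
    have hhalf : ∀ u : ℝ, |u| ≤ c → (1/2 : ℝ) ≤ ψ u := by
      intro u hu
      have : dist u 0 < d := by
        rw [Real.dist_eq, sub_zero]
        calc |u| ≤ d / 2 := hu
          _ < d := by linarith
      have h := hd this
      rw [hψ0, Real.dist_eq] at h
      have := abs_lt.mp h
      linarith [this.1]
    apply ereal_limsup_eq_top_of_freq
    intro M
    set κ : ℝ := 2 ^ α * c ^ α / 2 with hκdef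
    have hκ : 0 < κ := by positivity
    set M₀ : ℝ := max (M / κ) 0 with hM₀def
    have hfreq := ereal_freq_of_limsup_top hD M₀
    have hmap : Tendsto (fun ε : ℝ => ε / c) (𝓝[>] 0) (𝓝[>] 0) := by
      apply tendsto_nhdsWithin_of_tendsto_nhds_of_eventually_within
      · have : Tendsto (fun ε : ℝ => ε / c) (𝓝 0) (𝓝 (0 / c)) := (tendsto_id.div_const c)
        rw [zero_div] at this
        exact this.mono_left nhdsWithin_le_nhds
      · exact eventually_of_mem self_mem_nhdsWithin fun ε (hε : ε ∈ Ioi 0) => div_pos hε hc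
    have hfreq' : ∃ᶠ a in 𝓝[>] (0:ℝ), (M₀ : EReal) <
        (((μ (Ioo (x - c * a) (x + c * a))).toReal / (2 * (c * a)) ^ α : ℝ) : EReal) := by
      apply hmap.frequently
      refine hfreq.mono fun ε hε => ?_
      have hcc : c * (ε / c) = ε := by field_simp
      rw [hcc]
      exact hε
    have hfreq'' := hfreq'.and_eventually self_mem_nhdsWithin
    refine hfreq''.mono ?_
    rintro a ⟨hga, (ha : (0:ℝ) < a)⟩
    rw [EReal.coe_lt_coe_iff] at hga
    rw [EReal.coe_le_coe_iff]
    set t : ℝ := (μ (Ioo (x - c * a) (x + c * a))).toReal with htdef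
    have hint : Integrable (fun y => ψ ((x - y) / a)) μ := conv_integrable ψ hcont hbound μ x a
    -- integral lower bound
    have hI : t / 2 ≤ ∫ y, ψ ((x - y) / a) ∂μ := by
      have hIoo_sub : ∀ y ∈ Ioo (x - c * a) (x + c * a), (1/2 : ℝ) ≤ ψ ((x - y) / a) := by
        intro y hy
        apply hhalf
        rw [abs_div, abs_of_pos ha, div_le_iff₀ ha]
        have : |x - y| < c * a := abs_sub_lt_iff.mpr ⟨by linarith [hy.1], by linarith [hy.2]⟩
        linarith
      have h1 : (∫ _ in Ioo (x - c * a) (x + c * a), (1/2 : ℝ) ∂μ)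
          ≤ ∫ y in Ioo (x - c * a) (x + c * a), ψ ((x - y) / a) ∂μ :=
        setIntegral_mono_on (integrableOn_const (measure_ne_top _ _))
          hint.integrableOn measurableSet_Ioo hIoo_sub
      rw [setIntegral_const, smul_eq_mul, measureReal_def] at h1
      have h2 : (∫ y in Ioo (x - c * a) (x + c * a), ψ ((x - y) / a) ∂μ)
          ≤ ∫ y, ψ ((x - y) / a) ∂μ :=
        setIntegral_le_integral hint (Eventually.of_forall fun y => hpos _)
      linarith
    -- arithmetic
    set P : ℝ := 2 ^ α * c ^ α with hPdef
    have hP : 0 < P := by positivity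
    have haα : (0:ℝ) < a ^ α := Real.rpow_pos_of_pos ha α
    have h2ca : (2 * (c * a) : ℝ) ^ α = P * a ^ α := by
      rw [hPdef, Real.mul_rpow (by norm_num) (by positivity), Real.mul_rpow hc.le ha.le]
      ring
    have hga' : M₀ < t / (P * a ^ α) := by rwa [h2ca] at hga
    have e : κ * (t / (P * a ^ α)) = a ^ (-α) * (t / 2) := by
      rw [Real.rpow_neg ha.le, hκdef, hPdef]
      field_simp
    have hM₀M : M ≤ κ * M₀ := by
      have h1 : M / κ ≤ M₀ := le_max_left _ _
      calc M = κ * (M / κ) := by field_simp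
        _ ≤ κ * M₀ := mul_le_mul_of_nonneg_left h1 hκ.le
    calc M ≤ κ * M₀ := hM₀M
      _ ≤ κ * (t / (P * a ^ α)) := mul_le_mul_of_nonneg_left hga'.le hκ.le
      _ = a ^ (-α) * (t / 2) := e
      _ ≤ a ^ (-α) * ∫ y, ψ ((x - y) / a) ∂μ :=
          mul_le_mul_of_nonneg_left hI (Real.rpow_nonneg ha.le _)
  refine ⟨part1, ?_, ?_⟩
  · -- C < ⊤ → D < ⊤ : contrapositive of part1
    intro hCfin
    rw [lt_top_iff_ne_top] at hCfin ⊢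
    intro hDeq
    exact hCfin (part1 hDeq)
  · -- D < ⊤ → C < ⊤
    intro hDlt
    obtain ⟨M, hM1, _⟩ := EReal.lt_iff_exists_real_btwn.mp hDlt
    have hev := eventually_lt_of_limsup_lt hM1
    rw [eventually_nhdsWithin_iff, Metric.eventually_nhds_iff] at hev
    obtain ⟨ε0, hε00, hev⟩ := hev
    have hgnn : ∀ ε : ℝ, 0 < ε →
        (0:ℝ) ≤ (μ (Ioo (x - ε) (x + ε))).toReal / (2 * ε) ^ α := fun ε hε =>
      div_nonneg ENNReal.toReal_nonneg (Real.rpow_nonneg (by linarith) _)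
    have hM0 : 0 < M := by
      have hmem : (ε0 / 2 : ℝ) ∈ Ioi (0:ℝ) := by
        simp only [mem_Ioi]; linarith
      have hdist : dist (ε0 / 2) (0:ℝ) < ε0 := by
        rw [Real.dist_eq, sub_zero, abs_of_pos (by linarith)]; linarith
      have h := hev hdist hmem
      rw [EReal.coe_lt_coe_iff] at h
      exact lt_of_le_of_lt (hgnn _ (by linarith)) h
    set K : ℝ := max (M * 2 ^ α) (ε0 ^ (-α)) with hKdef
    have hK0 : 0 < K := lt_of_lt_of_le (by positivity) (le_max_left _ _)
    have hK : ∀ ε : ℝ, 0 < ε → (μ (Ioo (x - ε) (x + ε))).toReal ≤ K * ε ^ α := by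
      intro ε hε
      rcases lt_or_ge ε ε0 with h | h
      · have hdist : dist ε (0:ℝ) < ε0 := by
          rw [Real.dist_eq, sub_zero, abs_of_pos hε]; exact h
        have hlt := hev hdist hε
        rw [EReal.coe_lt_coe_iff] at hlt
        have h2ε : (0:ℝ) < (2 * ε) ^ α := Real.rpow_pos_of_pos (by linarith) α
        have h3 : (μ (Ioo (x - ε) (x + ε))).toReal < M * ((2 * ε) ^ α) :=
          (div_lt_iff₀ h2ε).mp hlt
        have h4 : (2 * ε : ℝ) ^ α = 2 ^ α * ε ^ α := Real.mul_rpow (by norm_num) hε.le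
        calc (μ (Ioo (x - ε) (x + ε))).toReal ≤ M * 2 ^ α * ε ^ α := by
              rw [h4] at h3; nlinarith
          _ ≤ K * ε ^ α :=
              mul_le_mul_of_nonneg_right (le_max_left _ _) (Real.rpow_nonneg hε.le _)
      · have h1 : (μ (Ioo (x - ε) (x + ε))).toReal ≤ 1 := by
          have hμ1 : μ (Ioo (x - ε) (x + ε)) ≤ 1 := prob_le_one
          calc (μ (Ioo (x - ε) (x + ε))).toReal ≤ (1 : ENNReal).toReal :=
                ENNReal.toReal_mono (by simp) hμ1
            _ = 1 := by simp
        have h2' : (1:ℝ) ≤ ε0 ^ (-α) * ε ^ α := by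
          have e1 : ε0 ^ α ≤ ε ^ α := Real.rpow_le_rpow hε00.le h hα0.le
          have e2 : ε0 ^ (-α) * ε0 ^ α = 1 := by
            rw [← Real.rpow_add hε00]; simp
          nlinarith [Real.rpow_pos_of_pos hε00 (-α)]
        calc (μ (Ioo (x - ε) (x + ε))).toReal ≤ 1 := h1
          _ ≤ ε0 ^ (-α) * ε ^ α := h2'
          _ ≤ K * ε ^ α :=
              mul_le_mul_of_nonneg_right (le_max_right _ _) (Real.rpow_nonneg hε.le _)
    obtain ⟨K', hK'0, hK'⟩ := conv_upper ψ hcont hC hδ hbound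
      (fun {t r} h1 h2 => psi_decay ψ hC.le (by linarith) hdec h1 h2) μ hα0 hα1 x hK0 hK
    have hevbd : ∀ᶠ a in 𝓝[>] (0:ℝ),
        ((a ^ (-α) * ∫ y : ℝ, ψ ((x - y) / a) ∂μ : ℝ) : EReal) ≤ ((K' : ℝ) : EReal) := by
      refine eventually_of_mem self_mem_nhdsWithin fun a (ha : (0:ℝ) < a) => ?_
      rw [EReal.coe_le_coe_iff]
      have hb := hK' a ha
      have h1 : a ^ (-α) * ∫ y, ψ ((x - y) / a) ∂μ ≤ a ^ (-α) * (K' * a ^ α) :=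
        mul_le_mul_of_nonneg_left hb (Real.rpow_nonneg ha.le _)
      have haα : (0:ℝ) < a ^ α := Real.rpow_pos_of_pos ha α
      have e : a ^ (-α) * (K' * a ^ α) = K' := by
        rw [Real.rpow_neg ha.le]
        field_simp
      linarith [e ▸ h1]
    exact lt_of_le_of_lt (limsup_le_of_le (by isBoundedDefault) hevbd) (EReal.coe_lt_top K')
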